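/- Let G be a Polish group, H a closed subgroup of G, and β a continuous action of H on a Polish space X. Then there is a Polish space Y and a continuous action α of G on Y such that the orbit equivalence relation E_β is Borel if and only if E_α is Borel. -/

import Mathlib

open Filter Topology Set Pointwise

namespace Stmt17Aux

/-- Weight of a chain. -/
noncomputable def wt (l : List ℕ) : ℝ := (l.map fun n => ((2:ℝ))⁻¹ ^ n).sum

lemma wt_nonneg (l : List ℕ) : 0 ≤ wt l := by
  apply List.sum_nonneg
  intro x hx
  simp only [List.mem_map] at hx
  obtain ⟨n, -, rfl⟩ := hx
  positivity

lemma wt_nil : wt [] = 0 := rfl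

lemma wt_cons (a : ℕ) (t : List ℕ) : wt (a :: t) = (2:ℝ)⁻¹ ^ a + wt t := by
  simp [wt]

lemma wt_append (l₁ l₂ : List ℕ) : wt (l₁ ++ l₂) = wt l₁ + wt l₂ := by
  simp [wt]

lemma wt_reverse (l : List ℕ) : wt l.reverse = wt l := by
  simp [wt, List.map_reverse, List.sum_reverse]

variable {G : Type*} [Group G]

/-- Chain set. -/
def chain (V : ℕ → Set G) : List ℕ → Set G
  | [] => 1
  | n :: t => V n * chain V t

lemma chain_nil (V : ℕ → Set G) : chain V [] = 1 := rfl

lemma chain_cons (V : ℕ → Set G) (a : ℕ) (t : List ℕ) :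
    chain V (a :: t) = V a * chain V t := rfl

lemma chain_append (V : ℕ → Set G) (l₁ l₂ : List ℕ) :
    chain V (l₁ ++ l₂) = chain V l₁ * chain V l₂ := by
  induction l₁ with
  | nil => simp [chain_nil]
  | cons a t ih => simp [chain_cons, ih, mul_assoc]

lemma chain_singleton (V : ℕ → Set G) (a : ℕ) : chain V [a] = V a := by
  simp [chain_cons, chain_nil]

lemma chain_inv (V : ℕ → Set G) (hsym : ∀ n, (V n)⁻¹ = V n) (l : List ℕ) :
    (chain V l)⁻¹ = chain V l.reverse := by
  induction l with
  | nil => simp [chain_nil]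
  | cons a t ih =>
      rw [List.reverse_cons, chain_append, chain_cons, chain_singleton, mul_inv_rev,
        hsym, ih]

section Subset

variable (V : ℕ → Set G) (hV1 : ∀ n, (1:G) ∈ V n)
  (hV3 : ∀ n, V (n+1) * V (n+1) * V (n+1) ⊆ V n)

include hV1 hV3

lemma V_succ_subset : ∀ n, V (n+1) ⊆ V n := by
  intro n x hx
  have : (1:G) * 1 * x ∈ V n := hV3 n (Set.mul_mem_mul (Set.mul_mem_mul (hV1 _) (hV1 _)) hx)
  simpa using this

lemma V_mono : ∀ m n, n ≤ m → V m ⊆ V n := by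
  intro m n h
  induction m with
  | zero => simp_all
  | succ k ih =>
      rcases Nat.lt_or_ge n (k+1) with h' | h'
      · exact (V_succ_subset V hV1 hV3 k).trans (ih (Nat.lt_succ_iff.1 h'))
      · have : n = k + 1 := le_antisymm h h'
        subst this; exact fun _ h => h

lemma mul_subset_of_one_mem {A B C : Set G} (h1 : (1:G) ∈ C) :
    A * B ⊆ A * B * C := fun x hx => by
  have : x * 1 ∈ A * B * C := Set.mul_mem_mul hx h1
  simpa using this

/-- Key chain lemma of the Birkhoff–Kakutani construction. -/
lemma chain_subset : ∀ (k : ℕ) (l : List ℕ), l.length ≤ k →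
    ∀ n, wt l < (2:ℝ)⁻¹ ^ n → chain V l ⊆ V n := by
  intro k
  induction k with
  | zero =>
      intro l hl n _
      rw [List.length_eq_zero_iff.1 (Nat.le_zero.1 hl), chain_nil]
      intro x hx
      rw [Set.mem_one] at hx
      exact hx ▸ hV1 n
  | succ k ih =>
      intro l hl n hwt
      rcases l with - | ⟨a, t⟩
      · rw [chain_nil]; intro x hx; rw [Set.mem_one] at hx; exact hx ▸ hV1 n
      by_cases hsmall : wt (a :: t) < (2:ℝ)⁻¹ ^ (n+1)
      · -- whole list already very small
        have hta : (2:ℝ)⁻¹ ^ a + wt t < (2:ℝ)⁻¹ ^ (n+1) := by rwa [wt_cons] at hsmall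
        have hwtt : wt t < (2:ℝ)⁻¹ ^ (n+1) := by
          have := wt_nonneg t
          nlinarith [pow_pos (by norm_num : (0:ℝ) < 2⁻¹) a]
        have ha : (2:ℝ)⁻¹ ^ a < (2:ℝ)⁻¹ ^ (n+1) := by
          have := wt_nonneg t
          linarith
        have han : n + 1 ≤ a := by
          by_contra hcon
          push_neg at hcon
          have h1 : (2:ℝ)⁻¹ ^ n ≤ 2⁻¹ ^ a :=
            pow_le_pow_of_le_one (by norm_num) (by norm_num) (Nat.le_of_lt_succ hcon)
          have h2 : (2:ℝ)⁻¹ ^ (n+1) ≤ 2⁻¹ ^ n :=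
            pow_le_pow_of_le_one (by norm_num) (by norm_num) (Nat.le_succ n)
          linarith
        have h1 : V a ⊆ V (n+1) := V_mono V hV1 hV3 a (n+1) han
        have h2 : chain V t ⊆ V (n+1) := ih t (by simpa using Nat.succ_le_succ_iff.1 (by simpa using hl)) (n+1) hwtt
        rw [chain_cons]
        refine subset_trans ?_ (hV3 n)
        refine subset_trans ?_ (mul_subset_of_one_mem V hV1 hV3 (hV1 (n+1)))
        exact Set.mul_subset_mul h1 h2
      · -- split the list at the greatest prefix of weight < 2⁻¹^(n+1)
        classical
        set l := a :: t with hldef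
        set P : ℕ → Prop := fun j => wt (l.take j) < (2:ℝ)⁻¹ ^ (n+1) with hPdef
        have hP0 : P 0 := by
          simp only [hPdef, List.take_zero, wt_nil]
          positivity
        set j := Nat.findGreatest P l.length with hjdef
        have hPj : P j := Nat.findGreatest_spec (Nat.zero_le _) hP0
        have hjle : j ≤ l.length := Nat.findGreatest_le _
        have hjlt : j < l.length := by
          rcases lt_or_eq_of_le hjle with h | h
          · exact h
          · exfalso; apply hsmall
            have h2 := hPj
            simp only [hPdef] at h2
            rw [h, List.take_length] at h2
            exact h2
        have hnot : ¬ P (j + 1) :=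
          Nat.findGreatest_is_greatest (Nat.lt_succ_self j) hjlt
        have hdrop : l.drop j = l[j] :: l.drop (j+1) := List.drop_eq_getElem_cons hjlt
        have htake1 : l.take j ++ [l[j]] = l.take (j+1) := by
          simpa using List.take_concat_get l j hjlt
        have hAB : (2:ℝ)⁻¹ ^ (n+1) ≤ wt (l.take j) + (2:ℝ)⁻¹ ^ l[j] := by
          have h1 : ¬ wt (l.take (j+1)) < (2:ℝ)⁻¹ ^ (n+1) := hnot
          rw [← htake1, wt_append, wt_cons, wt_nil] at h1
          push_neg at h1
          linarith
        have hwteq : wt l = wt (l.take j) + ((2:ℝ)⁻¹ ^ l[j] + wt (l.drop (j+1))) := by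
          nth_rewrite 1 [← List.take_append_drop j l]
          rw [hdrop, wt_append, wt_cons]
        have htot : wt (l.take j) + ((2:ℝ)⁻¹ ^ l[j] + wt (l.drop (j+1))) < (2:ℝ)⁻¹ ^ n := by
          rw [← hwteq]; exact hwt
        have hpow : (2:ℝ)⁻¹ ^ (n+1) = (2:ℝ)⁻¹ ^ n * 2⁻¹ := pow_succ _ _
        have hA : wt (l.take j) < (2:ℝ)⁻¹ ^ (n+1) := hPj
        have hC : wt (l.drop (j+1)) < (2:ℝ)⁻¹ ^ (n+1) := by nlinarith
        have hBn : (2:ℝ)⁻¹ ^ (l[j] : ℕ) < (2:ℝ)⁻¹ ^ n := by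
          have h0 := wt_nonneg (l.take j)
          have h1 := wt_nonneg (l.drop (j+1))
          linarith
        have hbge : n + 1 ≤ l[j] := by
          by_contra hcon
          push_neg at hcon
          have : (2:ℝ)⁻¹ ^ n ≤ 2⁻¹ ^ (l[j] : ℕ) :=
            pow_le_pow_of_le_one (by norm_num) (by norm_num) (Nat.le_of_lt_succ hcon)
          linarith
        have hVb : V l[j] ⊆ V (n+1) := V_mono V hV1 hV3 _ _ hbge
        have hlen1 : (l.take j).length ≤ k := by
          rw [List.length_take]
          have : j ≤ k := by omega
          omega
        have hlen2 : (l.drop (j+1)).length ≤ k := by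
          rw [List.length_drop]
          omega
        have ih1 : chain V (l.take j) ⊆ V (n+1) := ih _ hlen1 (n+1) hA
        have ih2 : chain V (l.drop (j+1)) ⊆ V (n+1) := ih _ hlen2 (n+1) hC
        calc chain V l = chain V (l.take j) * (V l[j] * chain V (l.drop (j+1))) := by
              nth_rewrite 1 [← List.take_append_drop j l]
              rw [hdrop, chain_append, chain_cons]
          _ ⊆ V (n+1) * (V (n+1) * V (n+1)) :=
              Set.mul_subset_mul ih1 (Set.mul_subset_mul hVb ih2)
          _ = V (n+1) * V (n+1) * V (n+1) := (mul_assoc _ _ _).symm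
          _ ⊆ V n := hV3 n

end Subset


section Norm

variable (G : Type*) [Group G] [TopologicalSpace G] [IsTopologicalGroup G]
  [FirstCountableTopology G]

theorem exists_invariant_norm : ∃ N : G → ℝ,
    (∀ x, 0 ≤ N x) ∧ (∀ x, N x ≤ 1) ∧ N 1 = 0 ∧ (∀ x, N x⁻¹ = N x) ∧
    (∀ x y, N (x * y) ≤ N x + N y) ∧ Tendsto N (𝓝 1) (𝓝 0) ∧
    (∀ U ∈ 𝓝 (1 : G), ∃ ε > 0, ∀ w, N w < ε → w ∈ U) := by
  classical
  obtain ⟨b, hb⟩ := (𝓝 (1:G)).exists_antitone_basis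
  -- step: shrink a neighborhood of 1 to a symmetric one whose triple product is inside
  have step : ∀ W ∈ 𝓝 (1:G), ∃ Z ∈ 𝓝 (1:G), Z⁻¹ = Z ∧ Z * Z * Z ⊆ W := by
    intro W hW
    obtain ⟨V₁, hV₁, h1⟩ := exists_nhds_one_split hW
    obtain ⟨V₂, hV₂, h2⟩ := exists_nhds_one_split hV₁
    set Z := (V₁ ∩ V₂) ∩ (V₁ ∩ V₂)⁻¹ with hZ
    refine ⟨Z, Filter.inter_mem (Filter.inter_mem hV₁ hV₂) (inv_mem_nhds_one G (Filter.inter_mem hV₁ hV₂)), by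
      simp [hZ, Set.inter_comm], ?_⟩
    rintro x ⟨y, hy, z, hz, rfl⟩
    obtain ⟨u, hu, w, hw, rfl⟩ := hy
    exact h1 _ (h2 _ hu.1.2 _ hw.1.2) _ hz.1.1
  choose F hF1 hF2 hF3 using step
  have hFsub : ∀ W hW, F W hW ⊆ W := by
    intro W hW x hx
    have h1 : (1:G) ∈ F W hW := mem_of_mem_nhds (hF1 W hW)
    have : (1:G) * 1 * x ∈ W := hF3 W hW (Set.mul_mem_mul (Set.mul_mem_mul h1 h1) hx)
    simpa using this
  -- recursive construction
  let V' : ℕ → {s : Set G // s ∈ 𝓝 (1:G)} := fun n =>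
    Nat.rec ⟨F (b 0) (hb.mem 0), hF1 _ _⟩
      (fun m p => ⟨F (p.1 ∩ b (m+1)) (Filter.inter_mem p.2 (hb.mem (m+1))), hF1 _ _⟩) n
  let V : ℕ → Set G := fun n => (V' n).1
  have hVnhds : ∀ n, V n ∈ 𝓝 (1:G) := fun n => (V' n).2
  have hV1 : ∀ n, (1:G) ∈ V n := fun n => mem_of_mem_nhds (hVnhds n)
  have hVsym : ∀ n, (V n)⁻¹ = V n := by
    intro n
    cases n with
    | zero => exact hF2 _ _
    | succ m => exact hF2 _ _
  have hV3 : ∀ n, V (n+1) * V (n+1) * V (n+1) ⊆ V n := by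
    intro n
    exact (hF3 _ _).trans Set.inter_subset_left
  have hVb : ∀ n, V n ⊆ b n := by
    intro n
    cases n with
    | zero => exact hFsub _ _
    | succ m => exact (hFsub _ _).trans Set.inter_subset_right
  -- the norm
  set S : G → Set ℝ := fun x => insert (1:ℝ) (wt '' {l : List ℕ | x ∈ chain V l}) with hSdef
  have hSne : ∀ x, (S x).Nonempty := fun x => ⟨1, Set.mem_insert _ _⟩
  have hSbdd : ∀ x, BddBelow (S x) := by
    intro x
    refine ⟨0, ?_⟩
    rintro r (rfl | ⟨l, -, rfl⟩)
    · norm_num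
    · exact wt_nonneg l
  set N : G → ℝ := fun x => sInf (S x) with hNdef
  have hN0 : ∀ x, 0 ≤ N x := fun x => le_csInf (hSne x) (fun r hr => by
    rcases hr with rfl | ⟨l, -, rfl⟩
    · norm_num
    · exact wt_nonneg l)
  have hNle1 : ∀ x, N x ≤ 1 := fun x => csInf_le (hSbdd x) (Set.mem_insert _ _)
  have hNlist : ∀ (x : G) (l : List ℕ), x ∈ chain V l → N x ≤ wt l := by
    intro x l hl
    exact csInf_le (hSbdd x) (Set.mem_insert_of_mem _ ⟨l, hl, rfl⟩)
  have hNlt : ∀ (x : G) (c : ℝ), N x < c → c ≤ 1 → ∃ l, x ∈ chain V l ∧ wt l < c := by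
    intro x c hc hc1
    obtain ⟨r, hr, hrc⟩ := exists_lt_of_csInf_lt (hSne x) hc
    rcases hr with rfl | ⟨l, hl, rfl⟩
    · exact absurd hrc (not_lt.2 hc1)
    · exact ⟨l, hl, hrc⟩
  have hN1 : N 1 = 0 := by
    refine le_antisymm ?_ (hN0 1)
    have : (1:G) ∈ chain V [] := by rw [chain_nil]; exact Set.mem_one.2 rfl
    simpa [wt_nil] using hNlist 1 [] this
  have hNinv : ∀ x, N x⁻¹ = N x := by
    have key : ∀ x : G, N x⁻¹ ≤ N x := by
      intro x
      refine le_csInf (hSne x) ?_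
      rintro r (rfl | ⟨l, hl, rfl⟩)
      · exact hNle1 _
      · refine le_trans (hNlist x⁻¹ l.reverse ?_) (le_of_eq (wt_reverse l))
        rw [← chain_inv V hVsym l]
        exact Set.inv_mem_inv.2 hl
    intro x
    refine le_antisymm (key x) ?_
    have := key x⁻¹
    rwa [inv_inv] at this
  have hNmul : ∀ x y, N (x * y) ≤ N x + N y := by
    intro x y
    refine le_of_forall_pos_le_add ?_
    intro ε hε
    rcases le_or_gt 1 (N x + ε/2) with h | h
    · have : N (x * y) ≤ 1 := hNle1 _
      have := hN0 y
      linarith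
    rcases le_or_gt 1 (N y + ε/2) with h' | h'
    · have : N (x * y) ≤ 1 := hNle1 _
      have := hN0 x
      linarith
    obtain ⟨l₁, hl₁, hw₁⟩ := hNlt x (N x + ε/2) (by linarith) h.le
    obtain ⟨l₂, hl₂, hw₂⟩ := hNlt y (N y + ε/2) (by linarith) h'.le
    have hxy : x * y ∈ chain V (l₁ ++ l₂) := by
      rw [chain_append]
      exact Set.mul_mem_mul hl₁ hl₂
    have := hNlist _ _ hxy
    rw [wt_append] at this
    linarith
  have hNsmall : ∀ n (x : G), x ∈ V n → N x ≤ (2:ℝ)⁻¹ ^ n := by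
    intro n x hx
    have : x ∈ chain V [n] := by rwa [chain_singleton]
    simpa [wt_cons, wt_nil] using hNlist x [n] this
  have hNtendsto : Tendsto N (𝓝 (1:G)) (𝓝 (0:ℝ)) := by
    rw [Metric.tendsto_nhds]
    intro ε hε
    obtain ⟨n, hn⟩ := exists_pow_lt_of_lt_one hε (by norm_num : (2:ℝ)⁻¹ < 1)
    filter_upwards [hVnhds n] with x hx
    rw [Real.dist_eq, sub_zero, abs_of_nonneg (hN0 x)]
    exact lt_of_le_of_lt (hNsmall n x hx) hn
  refine ⟨N, hN0, hNle1, hN1, hNinv, hNmul, hNtendsto, ?_⟩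
  intro U hU
  obtain ⟨n, -, hn⟩ := hb.toHasBasis.mem_iff.1 hU
  refine ⟨(2:ℝ)⁻¹ ^ n, by positivity, ?_⟩
  intro w hw
  have h1 : (2:ℝ)⁻¹ ^ n ≤ 1 := by
    apply pow_le_one₀ <;> norm_num
  obtain ⟨l, hl, hwl⟩ := hNlt w _ hw h1
  exact hn (hVb n (chain_subset V hV1 hV3 l.length l le_rfl n hwl hl))

end Norm

section FSpace

variable {G : Type*} [Group G] [TopologicalSpace G] [IsTopologicalGroup G]
variable {X : Type*} [TopologicalSpace X]

/-- A bounded compatible left-invariant "norm" giving the pseudometric `N (u⁻¹ * v)`. -/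
structure IsNorm (N : G → ℝ) : Prop where
  nonneg : ∀ x, 0 ≤ N x
  le_one : ∀ x, N x ≤ 1
  one : N 1 = 0
  inv : ∀ x, N x⁻¹ = N x
  mul : ∀ x y, N (x * y) ≤ N x + N y
  tendsto : Tendsto N (𝓝 1) (𝓝 0)
  small : ∀ U ∈ 𝓝 (1 : G), ∃ ε > 0, ∀ w, N w < ε → w ∈ U

/-- A bounded compatible metric. -/
structure IsDist (σ : X → X → ℝ) : Prop where
  refl : ∀ x, σ x x = 0
  symm : ∀ x y, σ x y = σ y x
  tri : ∀ x y z, σ x z ≤ σ x y + σ y z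
  le_one : ∀ x y, σ x y ≤ 1
  cont : Continuous fun p : X × X => σ p.1 p.2
  sep : ∀ x y, σ x y = 0 → x = y

namespace IsDist

variable {σ : X → X → ℝ} (hσ : IsDist σ)
include hσ

lemma nonneg : ∀ x y, 0 ≤ σ x y := by
  intro x y
  have h := hσ.tri x y x
  rw [hσ.refl, hσ.symm y x] at h
  linarith

lemma dense {v : ℕ → X} (hv : DenseRange v) (y : X) {ε : ℝ} (hε : 0 < ε) :
    ∃ m, σ y (v m) < ε := by
  have hc : ContinuousAt (fun z => σ y z) y := by
    have : Continuous fun z => σ y z := hσ.cont.comp (Continuous.prodMk_right y)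
    exact this.continuousAt
  have : {z | σ y z < ε} ∈ 𝓝 y := by
    have h0 : σ y y < ε := by rw [hσ.refl]; exact hε
    exact hc.preimage_mem_nhds (Iio_mem_nhds h0)
  obtain ⟨z, hz1, m, rfl⟩ := mem_closure_iff_nhds.1 (hv y) _ this
  exact ⟨m, hz1⟩

end IsDist

namespace IsNorm

variable {N : G → ℝ} (hN : IsNorm N)
include hN

lemma rho_symm (u w : G) : N (u⁻¹ * w) = N (w⁻¹ * u) := by
  rw [← hN.inv (u⁻¹ * w), mul_inv_rev, inv_inv]

lemma rho_tri (u w z : G) : N (u⁻¹ * z) ≤ N (u⁻¹ * w) + N (w⁻¹ * z) := by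
  have := hN.mul (u⁻¹ * w) (w⁻¹ * z)
  rwa [mul_assoc, ← mul_assoc w, mul_inv_cancel, one_mul] at this

lemma rho_inv_mul (a u w : G) : N ((a * u)⁻¹ * (a * w)) = N (u⁻¹ * w) := by
  congr 1
  group

lemma rho_self (u : G) : N (u⁻¹ * u) = 0 := by rw [inv_mul_cancel, hN.one]

lemma abs_sub (x y : G) : |N x - N y| ≤ N (y⁻¹ * x) := by
  rw [abs_sub_le_iff]
  constructor
  · have := hN.mul y (y⁻¹ * x)
    rw [← mul_assoc, mul_inv_cancel, one_mul] at this
    linarith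
  · have := hN.mul x (x⁻¹ * y)
    rw [← mul_assoc, mul_inv_cancel, one_mul] at this
    have h2 : N (x⁻¹ * y) = N (y⁻¹ * x) := hN.rho_symm x y
    linarith

lemma continuous : Continuous N := by
  rw [continuous_iff_continuousAt]
  intro a
  rw [ContinuousAt, Metric.tendsto_nhds]
  intro ε hε
  have h1 : Tendsto (fun w => a⁻¹ * w) (𝓝 a) (𝓝 (1:G)) := by
    have : Tendsto (fun w => a⁻¹ * w) (𝓝 a) (𝓝 (a⁻¹ * a)) :=
      (continuous_const.mul continuous_id).tendsto a
    rwa [inv_mul_cancel] at this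
  have h2 : ∀ᶠ w in 𝓝 a, N (a⁻¹ * w) < ε := h1.eventually (hN.tendsto.eventually
    (Filter.Tendsto.eventually_lt_const hε tendsto_id))
  filter_upwards [h2] with w hw
  rw [Real.dist_eq]
  exact lt_of_le_of_lt (hN.abs_sub w a) hw

lemma rho_dense {e : ℕ → G} (he : DenseRange e) (u : G) {ε : ℝ} (hε : 0 < ε) :
    ∃ j, N (u⁻¹ * e j) < ε := by
  have hc : Continuous fun w => N (u⁻¹ * w) :=
    hN.continuous.comp (continuous_const.mul continuous_id)
  have : {w | N (u⁻¹ * w) < ε} ∈ 𝓝 u := by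
    have h0 : N (u⁻¹ * u) < ε := by rw [hN.rho_self]; exact hε
    exact hc.continuousAt.preimage_mem_nhds (Iio_mem_nhds h0)
  obtain ⟨z, hz1, j, rfl⟩ := mem_closure_iff_nhds.1 (he u) _ this
  exact ⟨j, hz1⟩

end IsNorm

section Core

variable {G : Type*} [Group G] [TopologicalSpace G] [IsTopologicalGroup G]
variable {X : Type*} [TopologicalSpace X]
variable (N : G → ℝ) (e : ℕ → G)
variable (σ : X → X → ℝ) (v : ℕ → X)
variable {H : Subgroup G} (β : H → X → X)

/-- The space of `[0,2]`-valued functions on test pairs that are `1`-Lipschitz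
in the group variable. -/
def fspace : Set ((ℕ × ℕ) → ℝ) :=
  {f | (∀ p, 0 ≤ f p ∧ f p ≤ 2) ∧ ∀ m i j, f (i, m) ≤ f (j, m) + N ((e i)⁻¹ * e j)}

/-- Lipschitz extension from the dense sequence. -/
noncomputable def extF (f : (ℕ × ℕ) → ℝ) (m : ℕ) (u : G) : ℝ :=
  ⨅ j : ℕ, (f (j, m) + N (u⁻¹ * e j))

/-- The translation action. -/
noncomputable def act (g : G) (f : (ℕ × ℕ) → ℝ) : (ℕ × ℕ) → ℝ :=
  fun p => extF N e f p.2 (g⁻¹ * e p.1)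

/-- Orbit-distance functions. -/
noncomputable def psi (x : X) (u : G) (y : X) : ℝ :=
  ⨅ h : H, (N (u⁻¹ * (h : G)) + σ (β h⁻¹ x) y)

/-- The reduction map. -/
noncomputable def phi (x : X) : (ℕ × ℕ) → ℝ := fun p => psi N σ β x (e p.1) (v p.2)

section ExtF

variable {N e} {f : (ℕ × ℕ) → ℝ}

lemma extF_bdd (hN : IsNorm N) (hf0 : ∀ p, 0 ≤ f p) (m : ℕ) (u : G) :
    BddBelow (Set.range fun j : ℕ => f (j, m) + N (u⁻¹ * e j)) := by
  refine ⟨0, ?_⟩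
  rintro r ⟨j, rfl⟩
  exact add_nonneg (hf0 _) (hN.nonneg _)

lemma extF_le (hN : IsNorm N) (hf0 : ∀ p, 0 ≤ f p) (m : ℕ) (u : G) (j : ℕ) :
    extF N e f m u ≤ f (j, m) + N (u⁻¹ * e j) :=
  ciInf_le (extF_bdd hN hf0 m u) j

lemma le_extF {c : ℝ} (h : ∀ j, c ≤ f (j, m) + N (u⁻¹ * e j)) :
    c ≤ extF N e f m u := le_ciInf h

lemma extF_nonneg (hN : IsNorm N) (hf0 : ∀ p, 0 ≤ f p) (m : ℕ) (u : G) :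
    0 ≤ extF N e f m u :=
  le_extF fun j => add_nonneg (hf0 _) (hN.nonneg _)

lemma extF_eval (hN : IsNorm N) (hf : f ∈ fspace N e) (m i : ℕ) :
    extF N e f m (e i) = f (i, m) := by
  refine le_antisymm ?_ (le_extF fun j => hf.2 m i j)
  have := extF_le (e := e) hN (fun p => (hf.1 p).1) m (e i) i
  rwa [hN.rho_self, add_zero] at this

lemma extF_lip (hN : IsNorm N) (hf0 : ∀ p, 0 ≤ f p) (m : ℕ) (u u' : G) :
    extF N e f m u ≤ extF N e f m u' + N (u⁻¹ * u') := by
  have key : extF N e f m u - N (u⁻¹ * u') ≤ extF N e f m u' := by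
    refine le_extF fun j => ?_
    have h1 := extF_le (e := e) hN hf0 m u j
    have h2 := hN.rho_tri u u' (e j)
    linarith
  linarith

lemma extF_le_two (hN : IsNorm N) (he : DenseRange e) (hf : f ∈ fspace N e) (m : ℕ) (u : G) :
    extF N e f m u ≤ 2 := by
  refine le_of_forall_pos_le_add fun ε hε => ?_
  obtain ⟨j, hj⟩ := hN.rho_dense he u hε
  have := extF_le (e := e) hN (fun p => (hf.1 p).1) m u j
  have h2 := (hf.1 (j, m)).2
  linarith

/-- Lipschitz functions are recovered by the extension formula. -/
lemma lipext_eq (hN : IsNorm N) (he : DenseRange e) {φ : G → ℝ}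
    (hφ0 : ∀ u, 0 ≤ φ u) (hφ : ∀ u u', φ u ≤ φ u' + N (u⁻¹ * u')) (u : G) :
    (⨅ j : ℕ, (φ (e j) + N (u⁻¹ * e j))) = φ u := by
  have hbdd : BddBelow (Set.range fun j : ℕ => φ (e j) + N (u⁻¹ * e j)) := by
    refine ⟨0, ?_⟩
    rintro r ⟨j, rfl⟩
    exact add_nonneg (hφ0 _) (hN.nonneg _)
  refine le_antisymm (le_of_forall_pos_le_add fun ε hε => ?_) (le_ciInf fun j => hφ u (e j))
  obtain ⟨j, hj⟩ := hN.rho_dense he u (half_pos hε)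
  have h1 : φ (e j) ≤ φ u + N ((e j)⁻¹ * u) := hφ (e j) u
  rw [← hN.rho_symm] at h1
  have h2 : (⨅ j : ℕ, (φ (e j) + N (u⁻¹ * e j))) ≤ φ (e j) + N (u⁻¹ * e j) :=
    ciInf_le hbdd j
  linarith

end ExtF

section Act

variable {N : G → ℝ} {e : ℕ → G}

lemma act_mem (hN : IsNorm N) (he : DenseRange e) {f : (ℕ × ℕ) → ℝ}
    (hf : f ∈ fspace N e) (g : G) : act N e g f ∈ fspace N e := by
  constructor
  · intro p
    exact ⟨extF_nonneg hN (fun p => (hf.1 p).1) _ _, extF_le_two hN he hf _ _⟩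
  · intro m i j
    have h := extF_lip (e := e) hN (fun p => (hf.1 p).1) m (g⁻¹ * e i) (g⁻¹ * e j)
    have h2 : N ((g⁻¹ * e i)⁻¹ * (g⁻¹ * e j)) = N ((e i)⁻¹ * e j) := hN.rho_inv_mul _ _ _
    rw [h2] at h
    exact h

lemma act_one (hN : IsNorm N) {f : (ℕ × ℕ) → ℝ} (hf : f ∈ fspace N e) :
    act N e 1 f = f := by
  funext p
  have : act N e 1 f p = extF N e f p.2 (e p.1) := by
    simp [act]
  rw [this, extF_eval hN hf]

lemma act_mul (hN : IsNorm N) (he : DenseRange e) {f : (ℕ × ℕ) → ℝ}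
    (hf : f ∈ fspace N e) (g g' : G) :
    act N e (g * g') f = act N e g (act N e g' f) := by
  funext p
  have hφ0 : ∀ u, 0 ≤ extF N e f p.2 (g'⁻¹ * u) :=
    fun u => extF_nonneg hN (fun q => (hf.1 q).1) _ _
  have hφ : ∀ u u', extF N e f p.2 (g'⁻¹ * u) ≤ extF N e f p.2 (g'⁻¹ * u') + N (u⁻¹ * u') := by
    intro u u'
    have h := extF_lip (e := e) hN (fun q => (hf.1 q).1) p.2 (g'⁻¹ * u) (g'⁻¹ * u')
    rwa [hN.rho_inv_mul] at h
  have key : act N e g (act N e g' f) p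
      = extF N e f p.2 (g'⁻¹ * (g⁻¹ * e p.1)) := by
    show (⨅ j : ℕ, (act N e g' f (j, p.2) + N ((g⁻¹ * e p.1)⁻¹ * e j)))
      = extF N e f p.2 (g'⁻¹ * (g⁻¹ * e p.1))
    exact lipext_eq hN he hφ0 hφ (g⁻¹ * e p.1)
  rw [key]
  show extF N e f p.2 ((g * g')⁻¹ * e p.1) = _
  rw [mul_inv_rev, mul_assoc]

lemma act_continuous (hN : IsNorm N) (he : DenseRange e) :
    Continuous fun q : G × (fspace N e) => act N e q.1 (q.2 : (ℕ × ℕ) → ℝ) := by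
  apply continuous_pi
  intro p
  rw [continuous_iff_continuousAt]
  rintro ⟨g₀, f₀⟩
  rw [ContinuousAt, Metric.tendsto_nhds]
  intro ε hε
  -- choose a test point e j close to w₀ = g₀⁻¹ * e p.1
  obtain ⟨j, hj⟩ := hN.rho_dense he (g₀⁻¹ * e p.1) (show (0:ℝ) < ε/8 by linarith)
  -- neighborhood in the group coordinate
  have hg : ∀ᶠ g : G in 𝓝 g₀, N ((g⁻¹ * e p.1)⁻¹ * (g₀⁻¹ * e p.1)) < ε/4 := by
    have hcont : Continuous fun g : G => (g⁻¹ * e p.1)⁻¹ * (g₀⁻¹ * e p.1) := by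
      continuity
    have h2 : Tendsto (fun g : G => (g⁻¹ * e p.1)⁻¹ * (g₀⁻¹ * e p.1)) (𝓝 g₀) (𝓝 1) := by
      have h3 := hcont.tendsto g₀
      have h4 : (g₀⁻¹ * e p.1)⁻¹ * (g₀⁻¹ * e p.1) = 1 := inv_mul_cancel _
      rwa [h4] at h3
    exact h2.eventually (hN.tendsto.eventually
      (Filter.Tendsto.eventually_lt_const (show (0:ℝ) < ε/4 by linarith) tendsto_id))
  -- neighborhood in the function coordinate
  have hf : ∀ᶠ f : (fspace N e) in 𝓝 f₀,
      |(f : (ℕ × ℕ) → ℝ) (j, p.2) - (f₀ : (ℕ × ℕ) → ℝ) (j, p.2)| < ε/4 := by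
    have hcont : Continuous fun f : (fspace N e) => (f : (ℕ × ℕ) → ℝ) (j, p.2) :=
      (continuous_apply (j, p.2)).comp continuous_subtype_val
    have := hcont.tendsto f₀
    have hball : ∀ᶠ y : ℝ in 𝓝 ((f₀ : (ℕ × ℕ) → ℝ) (j, p.2)),
        |y - (f₀ : (ℕ × ℕ) → ℝ) (j, p.2)| < ε/4 := by
      have := Metric.ball_mem_nhds ((f₀ : (ℕ × ℕ) → ℝ) (j, p.2)) (show (0:ℝ) < ε/4 by linarith)
      filter_upwards [this] with y hy
      simpa [Real.dist_eq] using hy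
    exact this.eventually hball
  rw [nhds_prod_eq]
  filter_upwards [Filter.prod_mem_prod hg hf]
  rintro ⟨g, f⟩ ⟨h1, h2⟩
  simp only [Set.mem_setOf_eq] at h1 h2
  -- now the estimate
  set w₀ := g₀⁻¹ * e p.1 with hw₀
  set w := g⁻¹ * e p.1 with hw
  have hf0 : ∀ q, 0 ≤ (f : (ℕ × ℕ) → ℝ) q := fun q => (f.2.1 q).1
  have hf₀0 : ∀ q, 0 ≤ (f₀ : (ℕ × ℕ) → ℝ) q := fun q => (f₀.2.1 q).1
  have lip1 : extF N e (f : (ℕ × ℕ) → ℝ) p.2 w ≤ extF N e (f : (ℕ × ℕ) → ℝ) p.2 w₀ + ε/4 := by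
    have := extF_lip (e := e) hN hf0 p.2 w w₀
    linarith
  have lip1' : extF N e (f : (ℕ × ℕ) → ℝ) p.2 w₀ ≤ extF N e (f : (ℕ × ℕ) → ℝ) p.2 w + ε/4 := by
    have h3 := extF_lip (e := e) hN hf0 p.2 w₀ w
    have h4 : N (w₀⁻¹ * w) = N (w⁻¹ * w₀) := hN.rho_symm _ _
    rw [h4] at h3
    linarith
  -- compare at w₀ using the test point j
  have cmp : ∀ (f' : (ℕ × ℕ) → ℝ), f' ∈ fspace N e →
      |extF N e f' p.2 w₀ - f' (j, p.2)| ≤ ε/8 := by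
    intro f' hf'
    have h0 : ∀ q, 0 ≤ f' q := fun q => (hf'.1 q).1
    have hle : extF N e f' p.2 w₀ ≤ f' (j, p.2) + ε/8 := by
      have := extF_le (e := e) hN h0 p.2 w₀ j
      linarith
    have hge : f' (j, p.2) ≤ extF N e f' p.2 w₀ + ε/8 := by
      have h5 : f' (j, p.2) = extF N e f' p.2 (e j) := (extF_eval hN hf' p.2 j).symm
      have h6 := extF_lip (e := e) hN h0 p.2 (e j) w₀
      have h7 : N ((e j)⁻¹ * w₀) = N (w₀⁻¹ * e j) := hN.rho_symm _ _
      rw [h7] at h6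
      linarith
    rw [abs_sub_le_iff]
    exact ⟨by linarith, by linarith⟩
  have c1 := cmp (f : (ℕ × ℕ) → ℝ) f.2
  have c2 := cmp (f₀ : (ℕ × ℕ) → ℝ) f₀.2
  rw [Real.dist_eq]
  rw [abs_sub_le_iff] at c1 c2
  rw [abs_sub_lt_iff] at h2
  have final1 : act N e g (f : (ℕ × ℕ) → ℝ) p - act N e g₀ (f₀ : (ℕ × ℕ) → ℝ) p < ε := by
    show extF N e (f : (ℕ × ℕ) → ℝ) p.2 w - extF N e (f₀ : (ℕ × ℕ) → ℝ) p.2 w₀ < ε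
    linarith [c1.1, c1.2, c2.1, c2.2, h2.1, h2.2]
  have final2 : act N e g₀ (f₀ : (ℕ × ℕ) → ℝ) p - act N e g (f : (ℕ × ℕ) → ℝ) p < ε := by
    show extF N e (f₀ : (ℕ × ℕ) → ℝ) p.2 w₀ - extF N e (f : (ℕ × ℕ) → ℝ) p.2 w < ε
    linarith [c1.1, c1.2, c2.1, c2.2, h2.1, h2.2]
  rw [abs_sub_lt_iff]
  exact ⟨final1, final2⟩

end Act

section Psi

variable {N : G → ℝ} {e : ℕ → G} {σ : X → X → ℝ} {v : ℕ → X}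
variable {H : Subgroup G} {β : H → X → X}

lemma ciInf_equiv {ι ι' : Type*} (eq : ι ≃ ι') (g : ι' → ℝ) :
    (⨅ x, g (eq x)) = ⨅ y, g y := by
  show sInf (Set.range fun x => g (eq x)) = sInf (Set.range g)
  congr 1
  exact eq.surjective.range_comp g

variable (hN : IsNorm N) (hσ : IsDist σ)
include hN hσ

lemma psi_bdd (x : X) (u : G) (y : X) :
    BddBelow (Set.range fun h : H => N (u⁻¹ * (h : G)) + σ (β h⁻¹ x) y) := by
  refine ⟨0, ?_⟩
  rintro r ⟨h, rfl⟩
  exact add_nonneg (hN.nonneg _) (hσ.nonneg _ _)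

lemma psi_le (x : X) (u : G) (y : X) (h : H) :
    psi N σ β x u y ≤ N (u⁻¹ * (h : G)) + σ (β h⁻¹ x) y :=
  ciInf_le (psi_bdd hN hσ x u y) h

omit hN hσ in
lemma le_psi {c : ℝ} {x : X} {u : G} {y : X}
    (h : ∀ h' : H, c ≤ N (u⁻¹ * (h' : G)) + σ (β h'⁻¹ x) y) :
    c ≤ psi N σ β x u y := le_ciInf h

lemma psi_nonneg (x : X) (u : G) (y : X) : 0 ≤ psi N σ β x u y :=
  le_psi fun h => add_nonneg (hN.nonneg _) (hσ.nonneg _ _)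

lemma psi_le_two (x : X) (u : G) (y : X) : psi N σ β x u y ≤ 2 := by
  refine le_trans (psi_le hN hσ x u y 1) ?_
  have h1 := hN.le_one (u⁻¹ * ((1 : H) : G))
  have h2 := hσ.le_one (β (1 : H)⁻¹ x) y
  linarith

lemma psi_lip_u (x : X) (u u' : G) (y : X) :
    psi N σ β x u y ≤ psi N σ β x u' y + N (u⁻¹ * u') := by
  have key : psi N σ β x u y - N (u⁻¹ * u') ≤ psi N σ β x u' y := by
    refine le_psi fun h => ?_
    have h1 := psi_le hN hσ (β := β) x u y h
    have h2 := hN.rho_tri u u' ((h : G))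
    linarith
  linarith

lemma psi_lip_y (x : X) (u : G) (y y' : X) :
    psi N σ β x u y ≤ psi N σ β x u y' + σ y' y := by
  have key : psi N σ β x u y - σ y' y ≤ psi N σ β x u y' := by
    refine le_psi fun h => ?_
    have h1 := psi_le hN hσ (β := β) x u y h
    have h2 := hσ.tri (β h⁻¹ x) y' y
    linarith
  linarith

omit hN hσ in
lemma psi_translate (hβm : ∀ (h h' : H) (x : X), β (h * h') x = β h (β h' x))
    (h₀ : H) (x : X) (u : G) (y : X) :
    psi N σ β (β h₀ x) u y = psi N σ β x ((h₀ : G)⁻¹ * u) y := by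
  show (⨅ h : H, (N (u⁻¹ * (h : G)) + σ (β h⁻¹ (β h₀ x)) y))
      = (⨅ h : H, (N (((h₀ : G)⁻¹ * u)⁻¹ * (h : G)) + σ (β h⁻¹ x) y))
  rw [← ciInf_equiv (Equiv.mulLeft (h₀⁻¹ : H))
    (fun h : H => N (((h₀ : G)⁻¹ * u)⁻¹ * (h : G)) + σ (β h⁻¹ x) y)]
  apply congrArg
  funext h
  have e1 : (((h₀⁻¹ : H) * h : H) : G) = (h₀ : G)⁻¹ * (h : G) := rfl
  have e2 : ((h₀ : G)⁻¹ * u)⁻¹ * ((h₀ : G)⁻¹ * (h : G)) = u⁻¹ * (h : G) := by group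
  have e3 : β ((h₀⁻¹ : H) * h)⁻¹ x = β h⁻¹ (β h₀ x) := by
    rw [← hβm]
    congr 1
    group
  rw [Equiv.coe_mulLeft, e1, e2, e3]

omit hσ in
lemma psi_countable (hσ' : IsDist σ)
    (hβc : Continuous fun p : H × X => β p.1 p.2)
    {hs : ℕ → H} (hsd : DenseRange hs) (x : X) (u : G) (y : X) :
    psi N σ β x u y = ⨅ k : ℕ, (N (u⁻¹ * (hs k : G)) + σ (β (hs k)⁻¹ x) y) := by
  have hterm : Continuous fun h : H => N (u⁻¹ * (h : G)) + σ (β h⁻¹ x) y := by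
    apply Continuous.add
    · exact hN.continuous.comp (continuous_const.mul continuous_subtype_val)
    · have hc1 : Continuous fun h : H => β h⁻¹ x :=
        hβc.comp (Continuous.prodMk continuous_inv continuous_const)
      exact (hσ'.cont.comp (hc1.prodMk continuous_const))
  have hbdd : BddBelow (Set.range fun k : ℕ => N (u⁻¹ * (hs k : G)) + σ (β (hs k)⁻¹ x) y) := by
    refine ⟨0, ?_⟩
    rintro r ⟨k, rfl⟩
    exact add_nonneg (hN.nonneg _) (hσ'.nonneg _ _)
  refine le_antisymm (le_ciInf fun k => psi_le hN hσ' x u y (hs k)) ?_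
  refine le_psi fun h => ?_
  refine le_of_forall_pos_le_add fun ε hε => ?_
  have hnhd : (fun h' : H => N (u⁻¹ * (h' : G)) + σ (β h'⁻¹ x) y) ⁻¹'
      (Set.Iio (N (u⁻¹ * (h : G)) + σ (β h⁻¹ x) y + ε)) ∈ 𝓝 h := by
    apply hterm.continuousAt.preimage_mem_nhds
    apply Iio_mem_nhds
    linarith
  obtain ⟨z, hz1, k, rfl⟩ := mem_closure_iff_nhds.1 (hsd h) _ hnhd
  exact le_trans (ciInf_le hbdd k) (le_of_lt hz1)

end Psi

section Phi

variable {N : G → ℝ} {e : ℕ → G} {σ : X → X → ℝ} {v : ℕ → X}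
variable {H : Subgroup G} {β : H → X → X}
variable (hN : IsNorm N) (hσ : IsDist σ) (he : DenseRange e) (hv : DenseRange v)

include hN in
lemma eq_of_lip_eq_dense (he' : DenseRange e) {A B : G → ℝ}
    (hA : ∀ u u', A u ≤ A u' + N (u⁻¹ * u')) (hB : ∀ u u', B u ≤ B u' + N (u⁻¹ * u'))
    (hAB : ∀ j, A (e j) = B (e j)) (u : G) : A u = B u := by
  have key : ∀ (C D : G → ℝ), (∀ u u', C u ≤ C u' + N (u⁻¹ * u')) →
      (∀ u u', D u ≤ D u' + N (u⁻¹ * u')) → (∀ j, C (e j) = D (e j)) → C u ≤ D u := by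
    intro C D hC hD hCD
    refine le_of_forall_pos_le_add fun ε hε => ?_
    obtain ⟨j, hj⟩ := hN.rho_dense he' u (half_pos hε)
    have h1 := hC u (e j)
    have h2 := hD (e j) u
    rw [hN.rho_symm (e j) u] at h2
    have h3 := hCD j
    linarith
  exact le_antisymm (key A B hA hB hAB) (key B A hB hA (fun j => (hAB j).symm))

include hσ in
lemma eq_of_lip_eq_dense_X (hv' : DenseRange v) {A B : X → ℝ}
    (hA : ∀ y y', A y ≤ A y' + σ y' y) (hB : ∀ y y', B y ≤ B y' + σ y' y)
    (hAB : ∀ m, A (v m) = B (v m)) (y : X) : A y = B y := by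
  have key : ∀ (C D : X → ℝ), (∀ y y', C y ≤ C y' + σ y' y) →
      (∀ y y', D y ≤ D y' + σ y' y) → (∀ m, C (v m) = D (v m)) → C y ≤ D y := by
    intro C D hC hD hCD
    refine le_of_forall_pos_le_add fun ε hε => ?_
    obtain ⟨m, hm⟩ := hσ.dense hv' y (half_pos hε)
    have h1 := hC y (v m)
    have h2 := hD (v m) y
    have h3 := hCD m
    have h4 := hσ.symm y (v m)
    linarith
  exact le_antisymm (key A B hA hB hAB) (key B A hB hA (fun m => (hAB m).symm))

include hN hσ

lemma phi_mem (x : X) : phi N e σ v β x ∈ fspace N e := by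
  constructor
  · intro p
    exact ⟨psi_nonneg hN hσ _ _ _, psi_le_two hN hσ _ _ _⟩
  · intro m i j
    exact psi_lip_u hN hσ x (e i) (e j) (v m)

include he in
lemma act_phi (g : G) (x : X) (p : ℕ × ℕ) :
    act N e g (phi N e σ v β x) p = psi N σ β x (g⁻¹ * e p.1) (v p.2) := by
  show (⨅ j : ℕ, ((fun u => psi N σ β x u (v p.2)) (e j) + N ((g⁻¹ * e p.1)⁻¹ * e j)))
      = psi N σ β x (g⁻¹ * e p.1) (v p.2)
  exact lipext_eq hN he (fun u => psi_nonneg hN hσ _ _ _)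
    (fun u u' => psi_lip_u hN hσ x u u' (v p.2)) (g⁻¹ * e p.1)

include he in
lemma act_phi_h (hβm : ∀ (h h' : H) (x : X), β (h * h') x = β h (β h' x))
    (h₀ : H) (x : X) :
    act N e ((h₀ : G)) (phi N e σ v β x) = phi N e σ v β (β h₀ x) := by
  funext p
  rw [act_phi hN hσ he]
  show psi N σ β x ((h₀ : G)⁻¹ * e p.1) (v p.2) = psi N σ β (β h₀ x) (e p.1) (v p.2)
  rw [psi_translate hβm]

include he hv in
lemma reduce_back (hH : IsClosed (H : Set G))
    (hβc : Continuous fun p : H × X => β p.1 p.2)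
    (hβ1 : ∀ x, β 1 x = x) {g : G} {x x' : X}
    (hyp : act N e g (phi N e σ v β x) = phi N e σ v β x') :
    ∃ h : H, β h x = x' := by
  have step1 : ∀ i m, psi N σ β x (g⁻¹ * e i) (v m) = psi N σ β x' (e i) (v m) := by
    intro i m
    have h1 := congrFun hyp (i, m)
    rwa [act_phi hN hσ he] at h1
  have step2 : ∀ m u, psi N σ β x (g⁻¹ * u) (v m) = psi N σ β x' u (v m) := by
    intro m
    refine eq_of_lip_eq_dense hN he
      (A := fun u => psi N σ β x (g⁻¹ * u) (v m)) (B := fun u => psi N σ β x' u (v m))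
      ?_ ?_ (fun j => step1 j m)
    · intro u u'
      have h := psi_lip_u (β := β) hN hσ x (g⁻¹ * u) (g⁻¹ * u') (v m)
      rwa [hN.rho_inv_mul] at h
    · intro u u'
      exact psi_lip_u hN hσ x' u u' (v m)
  have step3 : ∀ y, psi N σ β x g⁻¹ y = psi N σ β x' 1 y := by
    refine eq_of_lip_eq_dense_X hσ hv
      (A := fun y => psi N σ β x g⁻¹ y) (B := fun y => psi N σ β x' 1 y)
      ?_ ?_ (fun m => by simpa using step2 m 1)
    · intro y y'
      exact psi_lip_y hN hσ x g⁻¹ y y'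
    · intro y y'
      exact psi_lip_y hN hσ x' 1 y y'
  have step4 : psi N σ β x' 1 x' = 0 := by
    refine le_antisymm ?_ (psi_nonneg hN hσ _ _ _)
    have h1 := psi_le hN hσ (β := β) x' 1 x' 1
    have h2 : N ((1:G)⁻¹ * ((1 : H) : G)) = 0 := by
      simpa using hN.one
    have h3 : σ (β (1 : H)⁻¹ x') x' = 0 := by
      rw [inv_one, hβ1, hσ.refl]
    rw [h2, h3] at h1
    simpa using h1
  have step5 : psi N σ β x g⁻¹ x' = 0 := (step3 x').trans step4
  have step6 : ∀ n : ℕ, ∃ h : H, N (g * (h : G)) + σ (β h⁻¹ x) x' < 1/(n+1) := by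
    intro n
    have hlt : psi N σ β x g⁻¹ x' < 1/(n+1) := by
      rw [step5]
      positivity
    obtain ⟨h, hh⟩ := exists_lt_of_ciInf_lt hlt
    refine ⟨h, ?_⟩
    rwa [inv_inv] at hh
  choose w hw using step6
  have hterm0 : ∀ n : ℕ, (0:ℝ) ≤ N (g * (w n : G)) := fun n => hN.nonneg _
  have hσ0 : ∀ n : ℕ, (0:ℝ) ≤ σ (β (w n)⁻¹ x) x' := fun n => hσ.nonneg _ _
  have hlim : Tendsto (fun n : ℕ => 1/((n:ℝ)+1)) atTop (𝓝 0) :=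
    tendsto_one_div_add_atTop_nhds_zero_nat
  have step7 : Tendsto (fun n => N (g * (w n : G))) atTop (𝓝 0) := by
    refine squeeze_zero hterm0 (fun n => ?_) hlim
    have := hw n
    have := hσ0 n
    linarith
  have step7' : Tendsto (fun n => σ (β (w n)⁻¹ x) x') atTop (𝓝 0) := by
    refine squeeze_zero hσ0 (fun n => ?_) hlim
    have := hw n
    have := hterm0 n
    linarith
  have step8 : Tendsto (fun n => g * (w n : G)) atTop (𝓝 (1:G)) := by
    rw [Filter.tendsto_def]
    intro U hU
    obtain ⟨ε, hε, hεU⟩ := hN.small U hU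
    have h1 : ∀ᶠ n in atTop, N (g * (w n : G)) < ε :=
      step7.eventually (Filter.Tendsto.eventually_lt_const hε tendsto_id)
    filter_upwards [h1] with n hn
    exact hεU _ hn
  have step9 : Tendsto (fun n => ((w n : G))) atTop (𝓝 g⁻¹) := by
    have h1 : Tendsto (fun z : G => g⁻¹ * z) (𝓝 (1:G)) (𝓝 (g⁻¹ * 1)) :=
      (continuous_const.mul continuous_id).tendsto 1
    have h2 := h1.comp step8
    simp only [mul_one] at h1 h2
    have h3 : (fun n => g⁻¹ * (g * (w n : G))) = fun n => ((w n : G)) := by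
      funext n
      group
    rwa [Function.comp_def, h3] at h2
  have step10 : g⁻¹ ∈ H :=
    hH.mem_of_tendsto step9 (Filter.Eventually.of_forall fun n => (w n).2)
  have step11 : Tendsto w atTop (𝓝 (⟨g⁻¹, step10⟩ : H)) := by
    rw [tendsto_subtype_rng]
    exact step9
  have hcont : Continuous fun h : H => σ (β h⁻¹ x) x' := by
    have hc1 : Continuous fun h : H => β h⁻¹ x :=
      hβc.comp (Continuous.prodMk continuous_inv continuous_const)
    exact hσ.cont.comp (hc1.prodMk continuous_const)
  have step12 : Tendsto (fun n => σ (β (w n)⁻¹ x) x') atTop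
      (𝓝 (σ (β (⟨g⁻¹, step10⟩ : H)⁻¹ x) x')) :=
    (hcont.tendsto _).comp step11
  have final : σ (β (⟨g⁻¹, step10⟩ : H)⁻¹ x) x' = 0 :=
    tendsto_nhds_unique step12 step7'
  exact ⟨(⟨g⁻¹, step10⟩ : H)⁻¹, hσ.sep _ _ final⟩

end Phi

end Core

end FSpace

end Stmt17Aux


open Stmt17Aux Filter Topology Set in
/-- for a continuous action `β` of a closed subgroup `H` of a Polish group
`G` on a Polish space `X`, there is a continuous action `α` of `G` on a Polish space `Y`
such that the orbit equivalence relation of `β` is Borel iff that of `α` is Borel. -/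
theorem stmt_17 (G : Type*) [Group G] [TopologicalSpace G] [IsTopologicalGroup G]
    [PolishSpace G] (H : Subgroup G) (hH : IsClosed (H : Set G))
    (X : Type*) [TopologicalSpace X] [PolishSpace X]
    (β : H → X → X) (hβc : Continuous fun p : H × X => β p.1 p.2)
    (hβ1 : ∀ x, β 1 x = x) (hβm : ∀ (h h' : H) (x : X), β (h * h') x = β h (β h' x)) :
    ∃ (Y : Type) (_ : TopologicalSpace Y) (_ : PolishSpace Y) (α : G → Y → Y),
      (Continuous fun p : G × Y => α p.1 p.2) ∧
      (∀ y, α 1 y = y) ∧ (∀ (g g' : G) (y : Y), α (g * g') y = α g (α g' y)) ∧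
      (@MeasurableSet (X × X) (borel _) {p : X × X | ∃ h : H, β h p.1 = p.2} ↔
        @MeasurableSet (Y × Y) (borel _) {p : Y × Y | ∃ g : G, α g p.1 = p.2}) := by
  classical
  by_cases hB : @MeasurableSet (X × X) (borel _) {p : X × X | ∃ h : H, β h p.1 = p.2}
  · -- trivial action on ℝ
    refine ⟨ℝ, inferInstance, inferInstance, fun _ y => y, continuous_snd,
      fun y => rfl, fun _ _ _ => rfl, ?_⟩
    have hset : {p : ℝ × ℝ | ∃ _ : G, p.1 = p.2} = {p : ℝ × ℝ | p.1 = p.2} := by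
      ext p
      simp
    have hmeas : @MeasurableSet (ℝ × ℝ) (borel _) {p : ℝ × ℝ | ∃ _ : G, p.1 = p.2} := by
      letI : MeasurableSpace (ℝ × ℝ) := borel _
      haveI : BorelSpace (ℝ × ℝ) := ⟨rfl⟩
      rw [hset]
      exact (isClosed_eq continuous_fst continuous_snd).measurableSet
    exact iff_of_true hB hmeas
  · -- main case: build the Lipschitz function space model
    have hXne : Nonempty X := by
      by_contra hne
      rw [not_nonempty_iff] at hne
      apply hB
      have hempty : {p : X × X | ∃ h : H, β h p.1 = p.2} = (∅ : Set (X × X)) :=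
        Set.eq_empty_of_isEmpty _
      rw [hempty]
      exact @MeasurableSet.empty _ (borel _)
    obtain ⟨N, hN1, hN2, hN3, hN4, hN5, hN6, hN7⟩ := exists_invariant_norm G
    have hNN : IsNorm N := ⟨hN1, hN2, hN3, hN4, hN5, hN6, hN7⟩
    have hσex : ∃ σ : X → X → ℝ, IsDist σ := by
      letI := TopologicalSpace.upgradeIsCompletelyMetrizable X
      refine ⟨fun a b => min (dist a b) 1, ?_, ?_, ?_, ?_, ?_, ?_⟩
      · intro x; simp
      · intro x y; simp [dist_comm]
      · intro x y z
        have h := dist_triangle x y z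
        have h1 : dist x y ≥ 0 := dist_nonneg
        have h2 : dist y z ≥ 0 := dist_nonneg
        have h3 : dist x z ≥ 0 := dist_nonneg
        rcases le_total (dist x y) 1 with h4 | h4 <;>
          rcases le_total (dist y z) 1 with h5 | h5 <;>
          rcases le_total (dist x z) 1 with h6 | h6 <;>
          simp [min_eq_left, min_eq_right, h4, h5, h6] <;> linarith
      · intro x y; exact min_le_right _ _
      · exact continuous_dist.min continuous_const
      · intro x y hxy
        have h1 : dist x y = 0 := by
          rcases le_total (dist x y) 1 with h4 | h4
          · rwa [min_eq_left h4] at hxy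
          · rw [min_eq_right h4] at hxy; norm_num at hxy
        exact dist_eq_zero.1 h1
    obtain ⟨σ, hσ⟩ := hσex
    haveI : Nonempty G := ⟨1⟩
    obtain ⟨e, he⟩ := TopologicalSpace.exists_dense_seq G
    obtain ⟨v, hv⟩ := TopologicalSpace.exists_dense_seq X
    haveI hHpol : PolishSpace H := hH.polishSpace
    haveI : Nonempty H := ⟨1⟩
    obtain ⟨hs, hsd⟩ := TopologicalSpace.exists_dense_seq H
    -- the space is Polish
    have hc1 : IsClosed {f : (ℕ × ℕ) → ℝ | ∀ p, 0 ≤ f p ∧ f p ≤ 2} := by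
      have heq : {f : (ℕ × ℕ) → ℝ | ∀ p, 0 ≤ f p ∧ f p ≤ 2} =
          ⋂ p, ({f : (ℕ × ℕ) → ℝ | 0 ≤ f p} ∩ {f | f p ≤ 2}) := by
        ext f
        simp [Set.mem_iInter, forall_and]
      rw [heq]
      exact isClosed_iInter fun p => (isClosed_le continuous_const (continuous_apply p)).inter
        (isClosed_le (continuous_apply p) continuous_const)
    have hc2 : IsClosed {f : (ℕ × ℕ) → ℝ |
        ∀ m i j, f (i, m) ≤ f (j, m) + N ((e i)⁻¹ * e j)} := by
      have heq : {f : (ℕ × ℕ) → ℝ | ∀ m i j, f (i, m) ≤ f (j, m) + N ((e i)⁻¹ * e j)} =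
          ⋂ m, ⋂ i, ⋂ j, {f : (ℕ × ℕ) → ℝ | f (i, m) ≤ f (j, m) + N ((e i)⁻¹ * e j)} := by
        ext f
        simp [Set.mem_iInter]
      rw [heq]
      exact isClosed_iInter fun m => isClosed_iInter fun i => isClosed_iInter fun j =>
        isClosed_le (continuous_apply _) ((continuous_apply _).add continuous_const)
    have hfclosed : IsClosed (fspace N e) := by
      have heq : fspace N e = {f : (ℕ × ℕ) → ℝ | ∀ p, 0 ≤ f p ∧ f p ≤ 2} ∩
          {f : (ℕ × ℕ) → ℝ | ∀ m i j, f (i, m) ≤ f (j, m) + N ((e i)⁻¹ * e j)} := rfl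
      rw [heq]
      exact hc1.inter hc2
    haveI hYpol : PolishSpace (fspace N e) := hfclosed.polishSpace
    set A : G → (fspace N e) → (fspace N e) :=
      fun g f => ⟨act N e g f.1, act_mem hNN he f.2 g⟩ with hA
    refine ⟨(fspace N e), inferInstance, hYpol, A, ?_, ?_, ?_, ?_⟩
    · exact Continuous.subtype_mk (act_continuous hNN he) _
    · intro y
      exact Subtype.ext (act_one hNN y.2)
    · intro g g' y
      exact Subtype.ext (act_mul hNN he y.2 g g')
    · refine iff_of_false hB ?_
      intro hα
      apply hB
      letI mX : MeasurableSpace X := borel X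
      haveI : BorelSpace X := ⟨rfl⟩
      set Φ : X → (fspace N e) := fun x => ⟨phi N e σ v β x, phi_mem hNN hσ x⟩ with hΦ
      have hphi_meas : Measurable Φ := by
        apply Measurable.subtype_mk
        apply measurable_pi_lambda
        intro p
        have hre : (fun x : X => phi N e σ v β x p)
            = fun x : X => ⨅ k : ℕ, (N ((e p.1)⁻¹ * (hs k : G)) + σ (β (hs k)⁻¹ x) (v p.2)) := by
          funext x
          exact psi_countable hNN hσ hβc hsd x (e p.1) (v p.2)
        rw [hre]
        apply Measurable.iInf
        intro k
        apply Measurable.const_add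
        apply Continuous.measurable
        exact hσ.cont.comp ((hβc.comp
          (continuous_const.prodMk continuous_id)).prodMk continuous_const)
      have hred : {p : X × X | ∃ h : H, β h p.1 = p.2}
          = (fun p : X × X => (Φ p.1, Φ p.2)) ⁻¹'
            {q : (fspace N e) × (fspace N e) | ∃ g : G, A g q.1 = q.2} := by
        ext ⟨x, x'⟩
        constructor
        · rintro ⟨h₀, hh⟩
          refine ⟨(h₀ : G), ?_⟩
          apply Subtype.ext
          show act N e (h₀ : G) (phi N e σ v β x) = phi N e σ v β x'
          rw [act_phi_h hNN hσ he hβm, hh]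
        · rintro ⟨g, hg⟩
          have hg' : act N e g (phi N e σ v β x) = phi N e σ v β x' := by
            have := congrArg Subtype.val hg
            exact this
          exact reduce_back hNN hσ he hv hH hβc hβ1 hg'
      have eX : (Prod.instMeasurableSpace : MeasurableSpace (X × X)) = borel (X × X) :=
        BorelSpace.measurable_eq
      have eY : (Prod.instMeasurableSpace :
            MeasurableSpace ((fspace N e) × (fspace N e)))
          = borel ((fspace N e) × (fspace N e)) :=
        BorelSpace.measurable_eq
      rw [← eX]
      rw [← eY] at hα
      have hPairMap : Measurable fun p : X × X => (Φ p.1, Φ p.2) :=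
        (hphi_meas.comp measurable_fst).prodMk (hphi_meas.comp measurable_snd)
      rw [hred]
      exact hPairMap hα
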